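/- Let a, ρ, γ₁ be real numbers with 0 < ρ < a and γ₁ > 0, let γ₂ = ((a³+ρ³)/(a³−ρ³))·γ₁ (the compatibility condition), and set α = (γ₁γ₂/2)(1/ρ² − 1/a²), β = (γ₁γ₂/2)(1/ρ² + 1/a²), δ₁ = γ₁²/(a−ρ)², δ₂ = γ₂²/(a+ρ)². Then (2α + δ₁ + δ₂ − √((δ₁−δ₂)² + 4β²)) / 2 > 0. -/
import Mathlib


open Real

set_option maxHeartbeats 2000000 in
/-- Under the compatibility condition, the smallest eigenvalue
`(2α + δ₁ + δ₂ − √((δ₁−δ₂)² + 4β²))/2` of the 2×2 block is positive. -/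
theorem smallest_eigenvalue_pos
    (a ρ γ₁ γ₂ α β δ₁ δ₂ : ℝ) (hρ : 0 < ρ) (hρa : ρ < a) (hγ₁ : 0 < γ₁)
    (hcompat : γ₂ = ((a ^ 3 + ρ ^ 3) / (a ^ 3 - ρ ^ 3)) * γ₁)
    (hα : α = (γ₁ * γ₂ / 2) * (1 / ρ ^ 2 - 1 / a ^ 2))
    (hβ : β = (γ₁ * γ₂ / 2) * (1 / ρ ^ 2 + 1 / a ^ 2))
    (hδ₁ : δ₁ = γ₁ ^ 2 / (a - ρ) ^ 2)
    (hδ₂ : δ₂ = γ₂ ^ 2 / (a + ρ) ^ 2) :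
    (2 * α + δ₁ + δ₂ - Real.sqrt ((δ₁ - δ₂) ^ 2 + 4 * β ^ 2)) / 2 > 0 := by
  have ha : 0 < a := hρ.trans hρa
  have hsub : 0 < a - ρ := by linarith
  have hadd : 0 < a + ρ := by linarith
  have hcube : 0 < a ^ 3 - ρ ^ 3 := by nlinarith [mul_pos hρ hρ, mul_pos (hρ.trans hρa) hρ]
  have hcube' : 0 < a ^ 3 + ρ ^ 3 := by positivity
  have hγ₂ : 0 < γ₂ := by rw [hcompat]; positivity
  have hαpos : 0 < α := by
    rw [hα]
    have : 1 / a ^ 2 < 1 / ρ ^ 2 := by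
      apply one_div_lt_one_div_of_lt (by positivity)
      nlinarith
    have h1 : 0 < γ₁ * γ₂ / 2 := by positivity
    nlinarith
  have hδ₁pos : 0 < δ₁ := by rw [hδ₁]; positivity
  have hδ₂pos : 0 < δ₂ := by rw [hδ₂]; positivity
  have hT : 0 < 2 * α + δ₁ + δ₂ := by linarith
  -- the determinant of the 2×2 block
  have hP : 0 < a ^ 8 + a ^ 7 * ρ - a ^ 6 * ρ ^ 2 + 2 * a ^ 4 * ρ ^ 4
      - a ^ 2 * ρ ^ 6 + a * ρ ^ 7 + ρ ^ 8 := by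
    have h6 : ρ ^ 6 < a ^ 6 := by
      have := pow_lt_pow_left₀ hρa hρ.le (n := 6) (by norm_num)
      simpa using this
    nlinarith [mul_pos ha (sub_pos.mpr h6), mul_pos (pow_pos ha 6) (mul_pos hρ hsub),
      pow_pos ha 4, pow_pos hρ 4, pow_pos hρ 8, mul_pos (pow_pos ha 4) (pow_pos hρ 4)]
  have hQ : 0 < a ^ 2 + a * ρ + ρ ^ 2 := by positivity
  have hdet : α * (δ₁ + δ₂) + δ₁ * δ₂ + α ^ 2 - β ^ 2
      = 3 * γ₁ ^ 4 * (a ^ 8 + a ^ 7 * ρ - a ^ 6 * ρ ^ 2 + 2 * a ^ 4 * ρ ^ 4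
        - a ^ 2 * ρ ^ 6 + a * ρ ^ 7 + ρ ^ 8)
        / ((a - ρ) ^ 4 * (a + ρ) ^ 2 * (a ^ 2 + a * ρ + ρ ^ 2) ^ 3) := by
    subst hcompat hα hβ hδ₁ hδ₂
    have h1 : a ^ 3 - ρ ^ 3 = (a - ρ) * (a ^ 2 + a * ρ + ρ ^ 2) := by ring
    field_simp
    ring
  have hdetpos : 0 < α * (δ₁ + δ₂) + δ₁ * δ₂ + α ^ 2 - β ^ 2 := by
    rw [hdet]; positivity
  have hlt : (δ₁ - δ₂) ^ 2 + 4 * β ^ 2 < (2 * α + δ₁ + δ₂) ^ 2 := by nlinarith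
  have hsqrt : Real.sqrt ((δ₁ - δ₂) ^ 2 + 4 * β ^ 2) < 2 * α + δ₁ + δ₂ :=
    (Real.sqrt_lt' hT).mpr hlt
  linarith
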